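/- (Conditioning reduces entropy) For any joint distribution p(x,y) on a finite product with all probabilities positive, and parameters 0 < k ≤ 1/2, r > 0, the generalized Tsallis conditional entropy satisfies S_{k,r}(Y|X) ≤ S_{k,r}(Y). -/

import Mathlib

/-- Two-parameter deformed logarithm: `ln_{k,r}(x) = (x^(2k) - 1) / (2k x^(r+k))`. -/
noncomputable def lnkr (k r x : ℝ) : ℝ := (x ^ (2 * k) - 1) / (2 * k * x ^ (r + k))

lemma lnkr_term_eq (k r : ℝ) (hk0 : 0 < k) {t : ℝ} (ht : 0 < t) :
    t ^ (r + k + 1) * lnkr k r t = (t ^ (2 * k + 1) - t) / (2 * k) := by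
  unfold lnkr
  have h0 : t ^ (r + k) ≠ 0 := (Real.rpow_pos_of_pos ht _).ne'
  have h1 : t ^ (r + k + 1) = t ^ (r + k) * t := by
    rw [Real.rpow_add ht, Real.rpow_one]
  have h2 : t ^ (2 * k + 1) = t ^ (2 * k) * t := by
    rw [Real.rpow_add ht, Real.rpow_one]
  rw [h1, h2]
  field_simp

theorem conditioning_reduces_entropy {X Y : Type*} [Fintype X] [Fintype Y]
    (p : X → Y → ℝ) (hp : ∀ x y, 0 < p x y) (hsum : ∑ x, ∑ y, p x y = 1)
    (k r : ℝ) (hk0 : 0 < k) (hk : k ≤ 1 / 2) (hr : 0 < r) :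
    -∑ x, ∑ y, (∑ y', p x y') ^ (2 * k + 1) *
        (p x y / ∑ y', p x y') ^ (r + k + 1) * lnkr k r (p x y / ∑ y', p x y') ≤
      -∑ y, (∑ x', p x' y) ^ (r + k + 1) * lnkr k r (∑ x', p x' y) := by
  rcases isEmpty_or_nonempty Y with hY | hY
  · simp at hsum
  rcases isEmpty_or_nonempty X with hX | hX
  · simp at hsum
  have hk2 : (0:ℝ) < 2 * k := by linarith
  have hα1 : (1:ℝ) ≤ 2 * k + 1 := by linarith
  set P : X → ℝ := fun x => ∑ y', p x y' with hPdef
  set Q : Y → ℝ := fun y => ∑ x', p x' y with hQdef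
  have hP : ∀ x, 0 < P x := fun x => Finset.sum_pos (fun y _ => hp x y) Finset.univ_nonempty
  have hQ : ∀ y, 0 < Q y := fun y => Finset.sum_pos (fun x _ => hp x y) Finset.univ_nonempty
  have hPsum : ∑ x, P x = 1 := hsum
  have hQsum : ∑ y, Q y = 1 := by rw [hQdef, ← hsum]; exact Finset.sum_comm
  have hP1 : ∀ x, P x ≤ 1 := by
    intro x
    rw [← hPsum]
    exact Finset.single_le_sum (fun x _ => (hP x).le) (Finset.mem_univ x)
  set q : X → Y → ℝ := fun x y => p x y / P x with hqdef
  have hq : ∀ x y, 0 < q x y := fun x y => div_pos (hp x y) (hP x)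
  have hq1 : ∀ x y, q x y ≤ 1 := by
    intro x y
    rw [hqdef]
    exact div_le_one_of_le₀ (Finset.single_le_sum (fun y _ => (hp x y).le)
      (Finset.mem_univ y)) (hP x).le
  have hqsum : ∀ x, ∑ y, q x y = 1 := by
    intro x
    rw [hqdef]
    simp only
    rw [← Finset.sum_div, div_self (hP x).ne']
  have hPq : ∀ x y, P x * q x y = p x y := by
    intro x y
    rw [hqdef]
    rw [mul_div_assoc']
    exact mul_div_cancel_left₀ _ (hP x).ne'
  -- rewrite each summand on the left
  have hterm : ∀ x y, (∑ y', p x y') ^ (2 * k + 1) * (p x y / ∑ y', p x y') ^ (r + k + 1)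
      * lnkr k r (p x y / ∑ y', p x y')
      = ((p x y) ^ (2 * k + 1) - P x ^ (2 * k) * p x y) / (2 * k) := by
    intro x y
    rw [mul_assoc, lnkr_term_eq k r hk0 (hq x y)]
    have e1 : P x ^ (2 * k + 1) * (q x y) ^ (2 * k + 1) = (p x y) ^ (2 * k + 1) := by
      rw [← Real.mul_rpow (hP x).le (hq x y).le, hPq]
    have e2 : P x ^ (2 * k + 1) * q x y = P x ^ (2 * k) * p x y := by
      rw [Real.rpow_add (hP x), Real.rpow_one, mul_assoc, hPq]
    calc P x ^ (2 * k + 1) * ((q x y ^ (2 * k + 1) - q x y) / (2 * k))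
        = (P x ^ (2 * k + 1) * q x y ^ (2 * k + 1) - P x ^ (2 * k + 1) * q x y) / (2 * k) := by
          ring
      _ = ((p x y) ^ (2 * k + 1) - P x ^ (2 * k) * p x y) / (2 * k) := by rw [e1, e2]
  have hrterm : ∀ y, (∑ x', p x' y) ^ (r + k + 1) * lnkr k r (∑ x', p x' y)
      = ((Q y) ^ (2 * k + 1) - Q y) / (2 * k) := fun y => lnkr_term_eq k r hk0 (hQ y)
  simp only [hterm, hrterm]
  rw [neg_le_neg_iff]
  simp only [← Finset.sum_div]
  gcongr
  -- key inequality
  set T : X → ℝ := fun x => ∑ y, (q x y) ^ (2 * k + 1) with hTdef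
  have hT1 : ∀ x, T x ≤ 1 := by
    intro x
    calc T x ≤ ∑ y, q x y := by
          refine Finset.sum_le_sum fun y _ => ?_
          calc (q x y) ^ (2 * k + 1) ≤ (q x y) ^ (1:ℝ) :=
                Real.rpow_le_rpow_of_exponent_ge (hq x y) (hq1 x y) hα1
            _ = q x y := Real.rpow_one _
      _ = 1 := hqsum x
  have hT0 : ∀ x, 0 ≤ T x :=
    fun x => Finset.sum_nonneg fun y _ => (Real.rpow_pos_of_pos (hq x y) _).le
  -- Jensen step: ∑ y, Q y ^ α ≤ ∑ x, P x * T x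
  have jensen : ∑ y, (Q y) ^ (2 * k + 1) ≤ ∑ x, P x * T x := by
    have step : ∀ y, (Q y) ^ (2 * k + 1) ≤ ∑ x, P x * (q x y) ^ (2 * k + 1) := by
      intro y
      have hQy : Q y = ∑ x, P x • q x y := by
        rw [hQdef]; simp only [smul_eq_mul, hPq]
      rw [hQy]
      have := (convexOn_rpow hα1).map_sum_le (t := Finset.univ)
        (fun x _ => (hP x).le) hPsum (fun x _ => (hq x y).le.trans_eq rfl)
      simpa [smul_eq_mul] using this
    calc ∑ y, (Q y) ^ (2 * k + 1) ≤ ∑ y, ∑ x, P x * (q x y) ^ (2 * k + 1) :=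
          Finset.sum_le_sum fun y _ => step y
      _ = ∑ x, ∑ y, P x * (q x y) ^ (2 * k + 1) := Finset.sum_comm
      _ = ∑ x, P x * T x := by
          refine Finset.sum_congr rfl fun x _ => ?_
          rw [hTdef, Finset.mul_sum]
  have hPα : ∀ x, P x ^ (2 * k + 1) ≤ P x := by
    intro x
    calc P x ^ (2 * k + 1) ≤ P x ^ (1:ℝ) :=
          Real.rpow_le_rpow_of_exponent_ge (hP x) (hP1 x) hα1
      _ = P x := Real.rpow_one _
  -- rewrite the double sum
  have hds : ∀ x, ∑ y, ((p x y) ^ (2 * k + 1) - P x ^ (2 * k) * p x y)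
      = P x ^ (2 * k + 1) * T x - P x ^ (2 * k + 1) := by
    intro x
    rw [Finset.sum_sub_distrib]
    congr 1
    · rw [hTdef, Finset.mul_sum]
      refine Finset.sum_congr rfl fun y _ => ?_
      rw [← Real.mul_rpow (hP x).le (hq x y).le, hPq]
    · rw [← Finset.mul_sum]
      rw [show ∑ y, p x y = P x from rfl]
      rw [Real.rpow_add (hP x), Real.rpow_one]
  simp only [hds]
  have key : ∀ x, P x * T x - P x ≤ P x ^ (2 * k + 1) * T x - P x ^ (2 * k + 1) := by
    intro x
    nlinarith [mul_nonneg (sub_nonneg.2 (hPα x)) (sub_nonneg.2 (hT1 x))]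
  calc ∑ y, ((Q y) ^ (2 * k + 1) - Q y)
      = ∑ y, (Q y) ^ (2 * k + 1) - 1 := by rw [Finset.sum_sub_distrib, hQsum]
    _ ≤ ∑ x, P x * T x - ∑ x, P x := by rw [hPsum]; linarith [jensen]
    _ = ∑ x, (P x * T x - P x) := (Finset.sum_sub_distrib _ _).symm
    _ ≤ ∑ x, (P x ^ (2 * k + 1) * T x - P x ^ (2 * k + 1)) :=
        Finset.sum_le_sum fun x _ => key x
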